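/- Let R be a Prüfer domain, M a branched maximal ideal that is idempotent and sharp (the radical of a finitely generated ideal). Then every M-primary ideal Q properly contained in M that is not divisorial has the form Q = IM for some finitely generated M-primary ideal I. -/

import Mathlib

/-- An ideal is divisorial if `I = (R : (R : I))`, phrased via fractional ideals. -/
def IsDivisorial (R : Type*) [CommRing R] [IsDomain R] (I : Ideal R) : Prop :=
  (1 / (1 / (I : FractionalIdeal (nonZeroDivisors R) (FractionRing R))) :
    FractionalIdeal (nonZeroDivisors R) (FractionRing R))
    = (I : FractionalIdeal (nonZeroDivisors R) (FractionRing R))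

/-- An ideal is invertible if it is a unit as a fractional ideal. -/
def IsInvertibleIdeal (R : Type*) [CommRing R] [IsDomain R] (I : Ideal R) : Prop :=
  IsUnit (I : FractionalIdeal (nonZeroDivisors R) (FractionRing R))

/-- A Prüfer domain: every nonzero finitely generated ideal is invertible. -/
def IsPrufer (R : Type*) [CommRing R] [IsDomain R] : Prop :=
  ∀ I : Ideal R, I ≠ ⊥ → I.FG → IsInvertibleIdeal R I

/-- A prime `P` is sharp if it contains a finitely generated ideal contained
only in the maximal ideals that contain `P`. -/
def IsSharp (R : Type*) [CommRing R] (P : Ideal R) : Prop :=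
  ∃ I : Ideal R, I.FG ∧ I ≤ P ∧ ∀ M : Ideal R, M.IsMaximal → I ≤ M → P ≤ M

section Aux

variable {R : Type*} [CommRing R] [IsDomain R]

/-- Local-global principle for ideal membership. -/
lemma mem_of_forall_maximal {J : Ideal R} {r : R}
    (h : ∀ N : Ideal R, N.IsMaximal → ∃ s ∉ N, s * r ∈ J) : r ∈ J := by
  set T : Ideal R := Submodule.comap (LinearMap.mulLeft R r) J with hTdef
  have hmem : ∀ s : R, s ∈ T ↔ r * s ∈ J := fun s => Iff.rfl
  have hT : T = ⊤ := by
    by_contra ht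
    obtain ⟨N, hN, hTN⟩ := Ideal.exists_le_maximal T ht
    obtain ⟨s, hs, hsr⟩ := h N hN
    exact hs (hTN ((hmem s).mpr (by rwa [mul_comm])))
  have h1 : (1 : R) ∈ T := hT ▸ Submodule.mem_top
  simpa using (hmem 1).mp h1

/-- Local-global principle for membership in the image of `R` in its fraction field. -/
lemma algMem_of_forall_maximal {z : FractionRing R}
    (h : ∀ N : Ideal R, N.IsMaximal → ∃ s ∉ N, ∃ e : R,
      algebraMap R (FractionRing R) s * z = algebraMap R (FractionRing R) e) :
    ∃ e : R, algebraMap R (FractionRing R) e = z := by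
  set T : Ideal R := Submodule.comap (LinearMap.toSpanSingleton R (FractionRing R) z)
      (LinearMap.range (Algebra.linearMap R (FractionRing R))) with hTdef
  have hmem : ∀ s : R, s ∈ T ↔ ∃ e : R,
      algebraMap R (FractionRing R) e = algebraMap R (FractionRing R) s * z := by
    intro s
    simp [T, Submodule.mem_comap, LinearMap.toSpanSingleton_apply, LinearMap.mem_range,
      Algebra.smul_def]
  have hT : T = ⊤ := by
    by_contra ht
    obtain ⟨N, hN, hTN⟩ := Ideal.exists_le_maximal T ht
    obtain ⟨s, hs, e, he⟩ := h N hN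
    exact hs (hTN ((hmem s).mpr ⟨e, he.symm⟩))
  have h1 : (1 : R) ∈ T := hT ▸ Submodule.mem_top
  obtain ⟨e, he⟩ := (hmem 1).mp h1
  exact ⟨e, by simpa using he⟩

/-- In a Prüfer domain, an invertible ideal is locally principal: at each maximal ideal `N`
one of the elements of `J` generates, up to a denominator outside `N`. -/
lemma prufer_loc_gen (hR : IsPrufer R) {J : Ideal R} (hJ0 : J ≠ ⊥) (hfg : J.FG)
    {N : Ideal R} (hN : N.IsMaximal) :
    ∃ a ∈ J, ∃ c ∉ N, ∀ j ∈ J, c * j ∈ Ideal.span {a} := by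
  classical
  have hinj : Function.Injective (algebraMap R (FractionRing R)) :=
    IsFractionRing.injective R (FractionRing R)
  obtain ⟨J'', hJ''⟩ := (hR J hJ0 hfg).exists_right_inv
  set D : Set R := {c | ∃ a ∈ J, ∀ j ∈ J, c * j ∈ Ideal.span {a}} with hD
  have hone : (1 : FractionRing R) ∈
      ((J : FractionalIdeal (nonZeroDivisors R) (FractionRing R)) * J'' :
        FractionalIdeal (nonZeroDivisors R) (FractionRing R)) := by
    rw [hJ'']; exact FractionalIdeal.one_mem_one _
  have hone' : (1 : FractionRing R) ∈
      ((J : FractionalIdeal (nonZeroDivisors R) (FractionRing R)) :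
        Submodule R (FractionRing R)) * (J'' : Submodule R (FractionRing R)) := by
    exact_mod_cast hone
  have key : (1 : FractionRing R) ∈
      Submodule.span R (⇑(Algebra.linearMap R (FractionRing R)) '' D) := by
    refine Submodule.mul_induction_on hone' ?_ ?_
    · intro y hy z hz
      obtain ⟨j, hjJ, rfl⟩ := (FractionalIdeal.mem_coeIdeal (nonZeroDivisors R)).mp hy
      have hz' : z ∈ J'' := hz
      have h1 : algebraMap R (FractionRing R) j * z ∈
          (1 : FractionalIdeal (nonZeroDivisors R) (FractionRing R)) := by
        rw [← hJ'']
        exact FractionalIdeal.mul_mem_mul (FractionalIdeal.mem_coeIdeal_of_mem _ hjJ) hz'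
      obtain ⟨c, hc⟩ := (FractionalIdeal.mem_one_iff _).mp h1
      refine Submodule.subset_span ⟨c, ⟨j, hjJ, ?_⟩, by simpa using hc⟩
      intro j₂ hj₂
      have h2 : algebraMap R (FractionRing R) j₂ * z ∈
          (1 : FractionalIdeal (nonZeroDivisors R) (FractionRing R)) := by
        rw [← hJ'']
        exact FractionalIdeal.mul_mem_mul (FractionalIdeal.mem_coeIdeal_of_mem _ hj₂) hz'
      obtain ⟨e, he⟩ := (FractionalIdeal.mem_one_iff _).mp h2
      rw [Ideal.mem_span_singleton]
      refine ⟨e, hinj ?_⟩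
      rw [map_mul, map_mul, hc, he]
      ring
    · intro x y hx hy; exact Submodule.add_mem _ hx hy
  rw [← Submodule.map_span (Algebra.linearMap R (FractionRing R)) D] at key
  obtain ⟨d, hd, hd1⟩ := key
  have hd' : d = 1 := hinj (by simpa using hd1)
  subst hd'
  by_contra hcon
  push_neg at hcon
  have hDN : D ⊆ (N : Set R) := by
    intro c hc
    by_contra hcN
    obtain ⟨a, haJ, ha⟩ := hc
    obtain ⟨j, hjJ, hj⟩ := hcon a haJ c hcN
    exact hj (ha j hjJ)
  have : Submodule.span R D ≤ N := Submodule.span_le.mpr hDN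
  exact hN.ne_top (Ideal.eq_top_iff_one N |>.mpr (this hd))

/-- Comparability of elements at a maximal ideal of a Prüfer domain. -/
lemma prufer_comparable (hR : IsPrufer R) {N : Ideal R} (hN : N.IsMaximal)
    (r r' : R) (hr' : r' ≠ 0) :
    ∃ s ∉ N, (∃ t, s * r = t * r') ∨ (∃ t, s * r' = t * r) := by
  classical
  have hr'mem : r' ∈ Ideal.span {r, r'} := Ideal.subset_span (by simp)
  have hrmem : r ∈ Ideal.span {r, r'} := Ideal.subset_span (by simp)
  have hJ0 : Ideal.span {r, r'} ≠ ⊥ := by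
    intro h
    apply hr'
    rw [h] at hr'mem
    simpa using hr'mem
  have hfg : (Ideal.span {r, r'}).FG := ⟨({r, r'} : Finset R), by simp⟩
  obtain ⟨a, haJ, c, hcN, hc⟩ := prufer_loc_gen hR hJ0 hfg hN
  have hc0 : c ≠ 0 := fun h => hcN (h ▸ N.zero_mem)
  obtain ⟨t, ht⟩ := Ideal.mem_span_singleton.mp (hc r hrmem)
  obtain ⟨t', ht'⟩ := Ideal.mem_span_singleton.mp (hc r' hr'mem)
  by_cases ha0 : a = 0
  · exfalso
    apply hr'
    have : c * r' = 0 := by rw [ht', ha0, zero_mul]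
    exact (mul_eq_zero.mp this).resolve_left hc0
  obtain ⟨u, v, huv⟩ := Ideal.mem_span_pair.mp haJ
  have hca : a * c = a * (u * t + v * t') := by
    calc a * c = u * (c * r) + v * (c * r') := by rw [← huv]; ring
    _ = a * (u * t + v * t') := by rw [ht, ht']; ring
  have hcuv : c = u * t + v * t' := mul_left_cancel₀ ha0 hca
  have htt' : t * r' = t' * r := by
    have h2 : c * (t * r') = c * (t' * r) := by
      calc c * (t * r') = t * (c * r') := by ring
      _ = t * (a * t') := by rw [ht']
      _ = t' * (a * t) := by ring
      _ = t' * (c * r) := by rw [ht]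
      _ = c * (t' * r) := by ring
    exact mul_left_cancel₀ hc0 h2
  by_cases htN : t ∈ N
  · have ht'N : t' ∉ N := fun h =>
      hcN (hcuv ▸ N.add_mem (N.mul_mem_left u htN) (N.mul_mem_left v h))
    exact ⟨t', ht'N, Or.inl ⟨t, htt'.symm⟩⟩
  · exact ⟨t, htN, Or.inr ⟨t', htt'⟩⟩

end Aux

/-- If `M` is a branched, idempotent, sharp maximal ideal of a Prüfer domain, then every
non-divisorial `M`-primary ideal properly contained in `M` has the form `I * M` for
some finitely generated `M`-primary ideal `I`. -/
theorem nondivisorial_primary_eq_fg_mul (R : Type*) [CommRing R] [IsDomain R]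
    (hR : IsPrufer R) (M : Ideal R) (hM : M.IsMaximal)
    (hbr : ∃ Q : Ideal R, Q.IsPrimary ∧ Q.radical = M ∧ Q ≠ M)
    (hid : M * M = M)
    (hrad : ∃ B : Ideal R, B.FG ∧ B.radical = M) :
    ∀ Q : Ideal R, Q.IsPrimary → Q.radical = M → Q < M → ¬ IsDivisorial R Q →
      ∃ I : Ideal R, I.FG ∧ I.IsPrimary ∧ I.radical = M ∧ Q = I * M := by
  classical
  intro Q hQ hQrad hQM hnd
  obtain ⟨B, hBfg, hBrad⟩ := hrad
  have hinj : Function.Injective (algebraMap R (FractionRing R)) :=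
    IsFractionRing.injective R (FractionRing R)
  have hQprim : ∀ {x y : R}, x * y ∈ Q → x ∈ Q ∨ y ∈ M := by
    intro x y h
    rcases (Ideal.isPrimary_iff.mp hQ).2 h with h' | h'
    · exact Or.inl h'
    · exact Or.inr (hQrad ▸ h')
  have hQbot : Q ≠ ⊥ := by
    intro h
    have hMbot : M = ⊥ := by rw [← hQrad, h, Ideal.radical_bot_of_noZeroDivisors]
    rw [h, hMbot] at hQM
    exact lt_irrefl _ hQM
  have h1M : (1 : R) ∉ M := fun h => hM.ne_top ((Ideal.eq_top_iff_one M).mpr h)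
  -- fractional ideal setup
  have hQ'0 : (Q : FractionalIdeal (nonZeroDivisors R) (FractionRing R)) ≠ 0 :=
    FractionalIdeal.coeIdeal_ne_zero.mpr hQbot
  have h1inv : (1 : FractionRing R) ∈
      1 / (Q : FractionalIdeal (nonZeroDivisors R) (FractionRing R)) := by
    rw [FractionalIdeal.mem_div_iff_of_ne_zero hQ'0]
    intro y hy
    obtain ⟨q, hq, rfl⟩ := (FractionalIdeal.mem_coeIdeal _).mp hy
    rw [one_mul]
    exact (FractionalIdeal.mem_one_iff _).mpr ⟨q, rfl⟩
  have hinv0 : (1 / (Q : FractionalIdeal (nonZeroDivisors R) (FractionRing R))) ≠ 0 := by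
    intro h
    rw [h] at h1inv
    simpa using h1inv
  have hle : (Q : FractionalIdeal (nonZeroDivisors R) (FractionRing R)) ≤
      1 / (1 / (Q : FractionalIdeal (nonZeroDivisors R) (FractionRing R))) := by
    intro x hx
    have hx' : x ∈ (Q : FractionalIdeal (nonZeroDivisors R) (FractionRing R)) := hx
    show x ∈ (1 / (1 / (Q : FractionalIdeal (nonZeroDivisors R) (FractionRing R))) :
      FractionalIdeal (nonZeroDivisors R) (FractionRing R))
    rw [FractionalIdeal.mem_div_iff_of_ne_zero hinv0]
    intro y hy
    rw [FractionalIdeal.mem_div_iff_of_ne_zero hQ'0] at hy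
    rw [mul_comm]
    exact hy x hx'
  have hlt := lt_of_le_of_ne hle (fun h => hnd h.symm)
  obtain ⟨w, hwin, hwout⟩ := SetLike.exists_of_lt hlt
  have hw1 : w ∈ (1 : FractionalIdeal (nonZeroDivisors R) (FractionRing R)) := by
    have := (FractionalIdeal.mem_div_iff_of_ne_zero hinv0).mp hwin 1 h1inv
    simpa using this
  obtain ⟨w₀, hw₀⟩ := (FractionalIdeal.mem_one_iff _).mp hw1
  have hw₀Q : w₀ ∉ Q := fun h => hwout ((FractionalIdeal.mem_coeIdeal _).mpr ⟨w₀, h, hw₀⟩)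
  have hw₀0 : w₀ ≠ 0 := fun h => hw₀Q (h ▸ Q.zero_mem)
  have hW : ∀ z : FractionRing R,
      (∀ q ∈ Q, ∃ e : R, algebraMap R (FractionRing R) e = z * algebraMap R (FractionRing R) q) →
      ∃ e : R, algebraMap R (FractionRing R) e = z * algebraMap R (FractionRing R) w₀ := by
    intro z hz
    have hzinv : z ∈ 1 / (Q : FractionalIdeal (nonZeroDivisors R) (FractionRing R)) := by
      rw [FractionalIdeal.mem_div_iff_of_ne_zero hQ'0]
      intro y hy
      obtain ⟨q, hq, rfl⟩ := (FractionalIdeal.mem_coeIdeal _).mp hy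
      obtain ⟨e, he⟩ := hz q hq
      exact (FractionalIdeal.mem_one_iff _).mpr ⟨e, he⟩
    have hwz := (FractionalIdeal.mem_div_iff_of_ne_zero hinv0).mp hwin z hzinv
    obtain ⟨e, he⟩ := (FractionalIdeal.mem_one_iff _).mp hwz
    exact ⟨e, by rw [he, ← hw₀, mul_comm]⟩
  -- exponent
  have hBle : B ≤ Q.radical := by rw [hQrad, ← hBrad]; exact Ideal.le_radical
  obtain ⟨n₀, hn₀⟩ := Ideal.exists_pow_le_of_le_radical_of_fg hBle hBfg
  set n := n₀ + 1 with hn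
  have hBn : B ^ n ≤ Q := le_trans (Ideal.pow_le_pow_right (Nat.le_succ n₀)) hn₀
  -- other maximal ideals
  have hBnotle : ∀ N : Ideal R, N.IsMaximal → N ≠ M → ∃ b ∈ B, b ∉ N := by
    intro N hNmax hNM
    rw [← SetLike.not_le_iff_exists]
    intro hBN
    have hMN : M ≤ N := by
      rw [← hBrad, ← hNmax.isPrime.radical]
      exact Ideal.radical_mono hBN
    exact hNM (hM.eq_of_le hNmax.ne_top hMN).symm
  have hMnotle : ∀ N : Ideal R, N.IsMaximal → N ≠ M → ∃ m' ∈ M, m' ∉ N := by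
    intro N hNmax hNM
    rw [← SetLike.not_le_iff_exists]
    intro h
    exact hNM (hM.eq_of_le hNmax.ne_top h).symm
  have hQnotle : ∀ N : Ideal R, N.IsMaximal → N ≠ M → ∃ q ∈ Q, q ∉ N := by
    intro N hNmax hNM
    obtain ⟨b, hbB, hbN⟩ := hBnotle N hNmax hNM
    exact ⟨b ^ n, hBn (Ideal.pow_mem_pow hbB n),
      fun h => hbN (hNmax.isPrime.mem_of_pow_mem n h)⟩
  -- Key step (H'): at M, `w₀ * x` is locally in `Q` for `x ∈ M`
  have hH' : ∀ x ∈ M, ∃ s ∉ M, s * (w₀ * x) ∈ Q := by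
    intro x hx
    by_cases hx0 : x = 0
    · exact ⟨1, h1M, by rw [hx0, mul_zero, mul_zero]; exact Q.zero_mem⟩
    by_contra hcon
    push_neg at hcon
    have hwx0 : w₀ * x ≠ 0 := mul_ne_zero hw₀0 hx0
    have hwxK : algebraMap R (FractionRing R) (w₀ * x) ≠ 0 :=
      fun h => hwx0 (hinj (by rw [h, map_zero]))
    have hdag : ∀ q ∈ Q, ∃ s ∉ M, ∃ t, s * q = t * (w₀ * x) := by
      intro q hq
      obtain ⟨s, hsM, hcase⟩ := prufer_comparable hR hM q (w₀ * x) hwx0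
      rcases hcase with h | ⟨t, ht⟩
      · exact ⟨s, hsM, h⟩
      · exact absurd (show s * (w₀ * x) ∈ Q by rw [ht]; exact Q.mul_mem_left t hq)
          (hcon s hsM)
    have hfin : ∀ T : Finset R, (↑T : Set R) ⊆ Q →
        ∃ s ∉ M, ∀ t ∈ T, ∃ u, s * t = u * (w₀ * x) := by
      intro T
      induction T using Finset.induction_on with
      | empty => exact fun _ => ⟨1, h1M, by simp⟩
      | @insert a T ha ih =>
        intro hsub
        have haQ : a ∈ Q := hsub (by simp)
        obtain ⟨s', hs', ih'⟩ := ih (fun t ht => hsub (by simp [ht]))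
        obtain ⟨sa, hsa, ta, hta⟩ := hdag a haQ
        refine ⟨sa * s', fun h => ?_, ?_⟩
        · rcases hM.isPrime.mem_or_mem h with h | h
          exacts [hsa h, hs' h]
        · intro t htT
          rcases Finset.mem_insert.mp htT with rfl | htT'
          · exact ⟨s' * ta, by rw [show sa * s' * t = s' * (sa * t) by ring, hta]; ring⟩
          · obtain ⟨u, hu⟩ := ih' t htT'
            exact ⟨sa * u, by rw [show sa * s' * t = sa * (s' * t) by ring, hu]; ring⟩
    obtain ⟨T, hT⟩ := Submodule.FG.pow hBfg n
    have hTQ : (↑T : Set R) ⊆ Q := fun t ht => hBn (hT ▸ Ideal.subset_span ht)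
    obtain ⟨s₁, hs₁M, hs₁⟩ := hfin T hTQ
    have hs₁' : ∀ b ∈ B ^ n, ∃ u, s₁ * b = u * (w₀ * x) := by
      intro b hb
      rw [← hT] at hb
      induction hb using Submodule.span_induction with
      | mem t ht => exact hs₁ t ht
      | zero => exact ⟨0, by simp⟩
      | add b c _ _ hb hc =>
        obtain ⟨u, hu⟩ := hb
        obtain ⟨v, hv⟩ := hc
        exact ⟨u + v, by rw [mul_add, hu, hv]; ring⟩
      | smul r b _ hb =>
        obtain ⟨u, hu⟩ := hb
        exact ⟨r * u, by rw [smul_eq_mul, show s₁ * (r * b) = r * (s₁ * b) by ring, hu]; ring⟩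
    set z : FractionRing R := algebraMap R (FractionRing R) s₁ *
      (algebraMap R (FractionRing R) (w₀ * x))⁻¹ with hz
    have hzQ : ∀ q ∈ Q, ∃ e : R,
        algebraMap R (FractionRing R) e = z * algebraMap R (FractionRing R) q := by
      intro q hq
      apply algMem_of_forall_maximal
      intro N hNmax
      by_cases hNM : N = M
      · rw [hNM]
        obtain ⟨s, hsM, t, hst⟩ := hdag q hq
        refine ⟨s, hsM, s₁ * t, ?_⟩
        have hst' : algebraMap R (FractionRing R) s * algebraMap R (FractionRing R) q =
            algebraMap R (FractionRing R) t * algebraMap R (FractionRing R) (w₀ * x) := by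
          rw [← map_mul, ← map_mul, hst]
        have h1 : algebraMap R (FractionRing R) s * (z * algebraMap R (FractionRing R) q) =
            algebraMap R (FractionRing R) s₁ *
              (algebraMap R (FractionRing R) s * algebraMap R (FractionRing R) q) *
              (algebraMap R (FractionRing R) (w₀ * x))⁻¹ := by
          rw [hz]; ring
        rw [h1, hst', map_mul _ s₁ t]
        rw [show algebraMap R (FractionRing R) s₁ *
            (algebraMap R (FractionRing R) t * algebraMap R (FractionRing R) (w₀ * x)) *
            (algebraMap R (FractionRing R) (w₀ * x))⁻¹ =
            algebraMap R (FractionRing R) s₁ * algebraMap R (FractionRing R) t *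
            algebraMap R (FractionRing R) (w₀ * x) *
            (algebraMap R (FractionRing R) (w₀ * x))⁻¹ by ring]
        rw [mul_inv_cancel_right₀ hwxK]
      · obtain ⟨b, hbB, hbN⟩ := hBnotle N hNmax hNM
        obtain ⟨u, hu⟩ := hs₁' (b ^ n) (Ideal.pow_mem_pow hbB n)
        refine ⟨b ^ n, fun h => hbN (hNmax.isPrime.mem_of_pow_mem n h), u * q, ?_⟩
        have hu' : algebraMap R (FractionRing R) (b ^ n) * algebraMap R (FractionRing R) s₁ =
            algebraMap R (FractionRing R) u * algebraMap R (FractionRing R) (w₀ * x) := by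
          rw [← map_mul, ← map_mul, mul_comm (b ^ n) s₁, hu]
        have h1 : algebraMap R (FractionRing R) (b ^ n) *
            (z * algebraMap R (FractionRing R) q) =
            algebraMap R (FractionRing R) (b ^ n) * algebraMap R (FractionRing R) s₁ *
              algebraMap R (FractionRing R) q *
              (algebraMap R (FractionRing R) (w₀ * x))⁻¹ := by
          rw [hz]; ring
        rw [h1, hu', map_mul _ u q]
        rw [show algebraMap R (FractionRing R) u * algebraMap R (FractionRing R) (w₀ * x) *
            algebraMap R (FractionRing R) q * (algebraMap R (FractionRing R) (w₀ * x))⁻¹ =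
            algebraMap R (FractionRing R) u * algebraMap R (FractionRing R) q *
            algebraMap R (FractionRing R) (w₀ * x) *
            (algebraMap R (FractionRing R) (w₀ * x))⁻¹ by ring]
        rw [mul_inv_cancel_right₀ hwxK]
    obtain ⟨e, he⟩ := hW z hzQ
    have hK : algebraMap R (FractionRing R) e * algebraMap R (FractionRing R) (w₀ * x) =
        algebraMap R (FractionRing R) s₁ * algebraMap R (FractionRing R) w₀ := by
      rw [he, hz]
      rw [show algebraMap R (FractionRing R) s₁ *
          (algebraMap R (FractionRing R) (w₀ * x))⁻¹ * algebraMap R (FractionRing R) w₀ *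
          algebraMap R (FractionRing R) (w₀ * x) =
          algebraMap R (FractionRing R) s₁ * algebraMap R (FractionRing R) w₀ *
          algebraMap R (FractionRing R) (w₀ * x) *
          (algebraMap R (FractionRing R) (w₀ * x))⁻¹ by ring]
      rw [mul_inv_cancel_right₀ hwxK]
    have key : e * (w₀ * x) = s₁ * w₀ :=
      hinj (by rw [map_mul _ e (w₀ * x), map_mul _ s₁ w₀]; exact hK)
    have hs₁ex : s₁ = e * x := by
      have h2 : w₀ * s₁ = w₀ * (e * x) := by linear_combination - key
      exact mul_left_cancel₀ hw₀0 h2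
    exact hs₁M (hs₁ex ▸ M.mul_mem_left e hx)
  -- (H): `w₀ * M ⊆ Q`
  have hH : ∀ x ∈ M, w₀ * x ∈ Q := by
    intro x hx
    apply mem_of_forall_maximal
    intro N hNmax
    by_cases hNM : N = M
    · rw [hNM]; exact hH' x hx
    · obtain ⟨q, hqQ, hqN⟩ := hQnotle N hNmax hNM
      exact ⟨q, hqN, Q.mul_mem_right _ hqQ⟩
  have hw₀M : w₀ ∈ M := by
    by_contra hwM
    have hMQ : M ≤ Q := by
      intro y hy
      rcases hQprim (show y * w₀ ∈ Q by rw [mul_comm]; exact hH y hy) with h | h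
      · exact h
      · exact absurd h hwM
    exact hQM.not_ge hMQ
  -- the ideal I
  have hIfg : (Ideal.span {w₀} ⊔ B ^ n).FG :=
    Submodule.FG.sup ⟨({w₀} : Finset R), by simp⟩ (Submodule.FG.pow hBfg n)
  have hIM : Ideal.span {w₀} ⊔ B ^ n ≤ M := by
    refine sup_le ?_ (le_trans hBn hQM.le)
    rw [Ideal.span_le]
    simpa using hw₀M
  have hIrad : (Ideal.span {w₀} ⊔ B ^ n).radical = M := by
    apply le_antisymm
    · rw [← hM.isPrime.radical]
      exact Ideal.radical_mono hIM
    · have hnne : n ≠ 0 := by omega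
      have hBnrad : (B ^ n).radical = M := by
        rw [Ideal.radical_pow B hnne, hBrad]
      rw [← hBnrad]
      exact Ideal.radical_mono le_sup_right
  refine ⟨Ideal.span {w₀} ⊔ B ^ n, hIfg,
    Ideal.isPrimary_of_isMaximal_radical (by rw [hIrad]; exact hM), hIrad, ?_⟩
  have hw₀I : w₀ ∈ Ideal.span {w₀} ⊔ B ^ n :=
    Submodule.mem_sup_left (Ideal.mem_span_singleton_self w₀)
  apply le_antisymm
  · -- Q ≤ I * M
    intro r hr
    apply mem_of_forall_maximal
    intro N hNmax
    by_cases hNM : N = M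
    · rw [hNM]
      obtain ⟨s, hsM, hcase⟩ := prufer_comparable hR hM r w₀ hw₀0
      rcases hcase with ⟨t, ht⟩ | ⟨t, ht⟩
      · have htw : w₀ * t ∈ Q := by rw [mul_comm, ← ht]; exact Q.mul_mem_left s hr
        have htM : t ∈ M := (hQprim htw).resolve_left hw₀Q
        refine ⟨s, hsM, ?_⟩
        rw [ht, mul_comm t w₀]
        exact Ideal.mul_mem_mul hw₀I htM
      · have hws : w₀ * s ∈ Q := by rw [mul_comm, ht]; exact Q.mul_mem_left t hr
        rcases hQprim hws with h | h
        exacts [absurd h hw₀Q, absurd h hsM]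
    · obtain ⟨b, hbB, hbN⟩ := hBnotle N hNmax hNM
      obtain ⟨m', hm'M, hm'N⟩ := hMnotle N hNmax hNM
      refine ⟨b ^ n * m', fun h => ?_, ?_⟩
      · rcases hNmax.isPrime.mem_or_mem h with h | h
        exacts [hbN (hNmax.isPrime.mem_of_pow_mem n h), hm'N h]
      · rw [show b ^ n * m' * r = b ^ n * r * m' by ring]
        exact Ideal.mul_mem_mul
          (Ideal.mul_mem_right r _ (Submodule.mem_sup_right (Ideal.pow_mem_pow hbB n))) hm'M
  · -- I * M ≤ Q
    rw [Ideal.mul_le]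
    intro r hrI s hsM
    rcases Submodule.mem_sup.mp hrI with ⟨p, hp, b, hb, rfl⟩
    obtain ⟨cp, hcp⟩ := Ideal.mem_span_singleton'.mp hp
    rw [show (p + b) * s = p * s + b * s by ring, ← hcp]
    refine Q.add_mem ?_ (Q.mul_mem_right s (hBn hb))
    rw [show cp * w₀ * s = cp * (w₀ * s) by ring]
    exact Q.mul_mem_left cp (hH s hsM)
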